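/- Let f_1,...,f_k be maps of a compact metric space X. An IFS is weakly hyperbolic if diam(f_{ω_1} ∘ ... ∘ f_{ω_n}(X)) → 0 for every sequence ω. If an IFS is weakly hyperbolic and minimal, then it is strongly-fibred: for every nonempty open set U ⊆ X there is ω ∈ {1,...,k}^N with ⋂_{n≥1} f_{ω_1} ∘ ... ∘ f_{ω_n}(X) ⊆ U. -/

import Mathlib

open Set Filter

/-- `hatComp f ω n = f_{ω_1} ∘ ... ∘ f_{ω_n}` (compositions in fibred order). -/
def hatComp {X : Type*} {k : ℕ} (f : Fin k → X → X) (ω : ℕ → Fin k) : ℕ → X → X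
  | 0 => id
  | n + 1 => fun x => hatComp f ω n (f (ω n) x)

/-- Composition of the generators along a finite word. -/
def listComp {X : Type*} {k : ℕ} (f : Fin k → X → X) (l : List (Fin k)) : X → X :=
  fun x => l.foldl (fun y i => f i y) x

/-- `hatComp f ω n` only depends on `ω 0, ..., ω (n-1)`. -/
lemma hatComp_congr {X : Type*} {k : ℕ} (f : Fin k → X → X) :
    ∀ (n : ℕ) (ω ω' : ℕ → Fin k), (∀ i, i < n → ω i = ω' i) →
      hatComp f ω n = hatComp f ω' n := by
  intro n
  induction n with
  | zero => intro ω ω' _; rfl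
  | succ n ih =>
    intro ω ω' h
    funext x
    show hatComp f ω n (f (ω n) x) = hatComp f ω' n (f (ω' n) x)
    rw [h n (Nat.lt_succ_self n), ih ω ω' (fun i hi => h i (hi.trans (Nat.lt_succ_self n)))]

/-- Images of `univ` under `hatComp` are nested. -/
lemma hatComp_image_subset {X : Type*} {k : ℕ} (f : Fin k → X → X) (ω : ℕ → Fin k)
    {m n : ℕ} (h : m ≤ n) :
    hatComp f ω n '' Set.univ ⊆ hatComp f ω m '' Set.univ := by
  induction n with
  | zero => rw [Nat.le_zero.mp h]
  | succ n ih =>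
    rcases Nat.lt_succ_iff_lt_or_eq.mp (Nat.lt_succ_of_le h) with h' | h'
    · rintro y ⟨x, -, rfl⟩
      exact ih (Nat.lt_succ_iff.mp h') ⟨f (ω n) x, mem_univ _, rfl⟩
    · rw [h']

/-- Relation between `hatComp` and `listComp`: if `ω` lists `w` in reverse order,
then `hatComp f ω w.length = listComp f w`. -/
lemma hatComp_eq_listComp {X : Type*} {k : ℕ} (f : Fin k → X → X) (d : Fin k) :
    ∀ (w : List (Fin k)) (ω : ℕ → Fin k),
      (∀ i, i < w.length → ω i = w.getD (w.length - 1 - i) d) →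
      ∀ x, hatComp f ω w.length x = listComp f w x := by
  intro w
  induction w with
  | nil => intro ω _ x; rfl
  | cons a w ih =>
    intro ω h x
    have hlen : (a :: w).length = w.length + 1 := rfl
    rw [hlen]
    show hatComp f ω w.length (f (ω w.length) x) = listComp f (a :: w) x
    have ha : ω w.length = a := by
      have := h w.length (by simp)
      simpa using this
    rw [ha]
    have h' : ∀ i, i < w.length → ω i = w.getD (w.length - 1 - i) d := by
      intro i hi
      have := h i (by simp; omega)
      rw [this]
      have : (a :: w).length - 1 - i = (w.length - 1 - i) + 1 := by
        simp only [List.length_cons]; omega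
      rw [this]
      rfl
    have := ih ω h' (f a x)
    rw [this]
    rfl

lemma uniform_small_diam {X : Type*} [MetricSpace X] [CompactSpace X] {k : ℕ}
    (f : Fin k → X → X)
    (hwh : ∀ ω : ℕ → Fin k,
      Tendsto (fun n : ℕ => Metric.diam (hatComp f ω n '' Set.univ)) atTop (nhds 0))
    (hk : 0 < k) {ε : ℝ} (hε : 0 < ε) :
    ∃ N, 1 ≤ N ∧ ∀ ω : ℕ → Fin k, Metric.diam (hatComp f ω N '' Set.univ) < ε := by
  by_contra hcon
  push_neg at hcon
  have hne : ∀ n : ℕ, ∃ ω : ℕ → Fin k, ε ≤ Metric.diam (hatComp f ω (n + 1) '' Set.univ) :=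
    fun n => hcon (n + 1) (Nat.succ_le_succ (Nat.zero_le n))
  set A : ℕ → Set (ℕ → Fin k) :=
    fun n => {ω | ε ≤ Metric.diam (hatComp f ω (n + 1) '' Set.univ)} with hA
  have hbd : ∀ (ω : ℕ → Fin k) (n : ℕ),
      Bornology.IsBounded (hatComp f ω n '' Set.univ) :=
    fun ω n => isCompact_univ.isBounded.subset (subset_univ _)
  have hsub : ∀ n, A (n + 1) ⊆ A n := by
    intro n ω hω
    have h1 : hatComp f ω (n + 2) '' Set.univ ⊆ hatComp f ω (n + 1) '' Set.univ :=
      hatComp_image_subset f ω (by omega)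
    exact le_trans hω (Metric.diam_mono h1 (hbd ω (n + 1)))
  haveI : Nonempty (Fin k) := ⟨⟨0, hk⟩⟩
  have hclosed : ∀ n, IsClosed (A n) := by
    intro n
    have key : (fun ω : ℕ → Fin k => Metric.diam (hatComp f ω (n + 1) '' Set.univ)) =
        (fun v : Fin (n + 1) → Fin k =>
          Metric.diam (hatComp f (fun j => if h : j < n + 1 then v ⟨j, h⟩ else v 0) (n + 1)
            '' Set.univ)) ∘ (fun ω (i : Fin (n + 1)) => ω i.val) := by
      funext ω
      simp only [Function.comp]
      exact congrArg (fun g => Metric.diam (g '' Set.univ))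
        (hatComp_congr f (n + 1) _ _ (fun i hi => by simp [hi]))
    have hcont : Continuous
        (fun ω : ℕ → Fin k => Metric.diam (hatComp f ω (n + 1) '' Set.univ)) := by
      rw [key]
      exact (continuous_of_discreteTopology).comp
        (continuous_pi fun i => continuous_apply i.val)
    exact isClosed_Ici.preimage hcont
  have hne' : ∀ n, (A n).Nonempty := fun n => hne n
  obtain ⟨ω, hω⟩ := IsCompact.nonempty_iInter_of_sequence_nonempty_isCompact_isClosed
    A hsub hne' ((hclosed 0).isCompact) hclosed
  have hge : ∀ n : ℕ, ε ≤ Metric.diam (hatComp f ω (n + 1) '' Set.univ) := by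
    intro n
    have := mem_iInter.mp hω n
    exact this
  have hlim : Tendsto (fun n : ℕ => Metric.diam (hatComp f ω (n + 1) '' Set.univ))
      atTop (nhds 0) := (hwh ω).comp (tendsto_add_atTop_nat 1)
  have : ε ≤ 0 := ge_of_tendsto' hlim hge
  linarith

theorem weakly_hyperbolic_minimal_implies_strongly_fibred
    {X : Type*} [MetricSpace X] [CompactSpace X] {k : ℕ}
    (f : Fin k → X → X) (hf : ∀ i, Continuous (f i))
    -- weak hyperbolicity
    (hwh : ∀ ω : ℕ → Fin k,
      Tendsto (fun n : ℕ => Metric.diam (hatComp f ω n '' Set.univ)) atTop (nhds 0))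
    -- minimality of the IFS
    (hmin : ∀ x : X, Dense {y : X | ∃ l : List (Fin k), l ≠ [] ∧ y = listComp f l x}) :
    ∀ U : Set X, IsOpen U → U.Nonempty →
      ∃ ω : ℕ → Fin k, (⋂ n ≥ 1, hatComp f ω n '' Set.univ) ⊆ U := by
  intro U hU hUne
  obtain ⟨x₀, hx₀⟩ := hUne
  obtain ⟨r, hr, hball⟩ := Metric.isOpen_iff.mp hU x₀ hx₀
  haveI : Nonempty X := ⟨x₀⟩
  -- k > 0
  have hk : 0 < k := by
    rcases Nat.eq_zero_or_pos k with hk0 | hk0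
    · exfalso
      subst hk0
      obtain ⟨y, hy⟩ := (hmin x₀).nonempty
      obtain ⟨l, hl, -⟩ := hy
      rcases l with _ | ⟨a, l⟩
      · exact hl rfl
      · exact a.elim0
    · exact hk0
  have hr2 : 0 < r / 2 := by linarith
  obtain ⟨N, hN1, hN⟩ := uniform_small_diam f hwh hk hr2
  -- find an arbitrarily long word landing near x₀
  have hlong : ∀ m : ℕ, ∃ l : List (Fin k),
      m ≤ l.length ∧ dist (listComp f l x₀) x₀ < r / 2 := by
    intro m
    induction m with
    | zero =>
      refine ⟨[], le_refl _, ?_⟩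
      simp [listComp, hr2]
    | succ m ih =>
      obtain ⟨l, hlen, _⟩ := ih
      obtain ⟨y, hy1, hy2⟩ := (hmin (listComp f l x₀)).exists_mem_open
        Metric.isOpen_ball ⟨x₀, Metric.mem_ball_self hr2⟩
      obtain ⟨l', hl'ne, rfl⟩ := hy1
      refine ⟨l ++ l', ?_, ?_⟩
      · rw [List.length_append]
        have : 1 ≤ l'.length := List.length_pos_iff.mpr hl'ne
        omega
      · have : listComp f (l ++ l') x₀ = listComp f l' (listComp f l x₀) := by
          simp [listComp, List.foldl_append]
        rw [this]
        simpa [dist_comm] using Metric.mem_ball.mp hy2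
  obtain ⟨l, hlen, hdist⟩ := hlong N
  -- take the last N letters
  set v : List (Fin k) := l.drop (l.length - N) with hv
  have hvlen : v.length = N := by
    rw [hv, List.length_drop]
    omega
  -- the landing point is in the image of listComp f v
  have hsplit : listComp f l x₀ =
      listComp f v (listComp f (l.take (l.length - N)) x₀) := by
    have h : List.foldl (fun y i => f i y) x₀
        (l.take (l.length - N) ++ l.drop (l.length - N)) =
        List.foldl (fun y i => f i y) (List.foldl (fun y i => f i y) x₀
          (l.take (l.length - N))) (l.drop (l.length - N)) := List.foldl_append
    rw [List.take_append_drop] at h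
    exact h
  set d : Fin k := ⟨0, hk⟩
  set ω : ℕ → Fin k := fun i => v.getD (N - 1 - i) d with hω
  have hhat : ∀ x, hatComp f ω N x = listComp f v x := by
    intro x
    have := hatComp_eq_listComp f d v ω ?_ x
    · rwa [hvlen] at this
    · intro i hi
      rw [hvlen] at hi ⊢
  have hfe : hatComp f ω N = listComp f v := funext hhat
  have himg : hatComp f ω N '' Set.univ = listComp f v '' Set.univ := by rw [hfe]
  -- the image is contained in U
  have hU' : hatComp f ω N '' Set.univ ⊆ U := by
    intro y hy
    apply hball
    rw [Metric.mem_ball]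
    have hbd : Bornology.IsBounded (hatComp f ω N '' Set.univ) :=
      isCompact_univ.isBounded.subset (subset_univ _)
    have hp : listComp f l x₀ ∈ hatComp f ω N '' Set.univ := by
      rw [himg, hsplit]
      exact ⟨_, mem_univ _, rfl⟩
    have h1 : dist y (listComp f l x₀) ≤ Metric.diam (hatComp f ω N '' Set.univ) :=
      Metric.dist_le_diam_of_mem hbd hy hp
    calc dist y x₀ ≤ dist y (listComp f l x₀) + dist (listComp f l x₀) x₀ :=
          dist_triangle _ _ _
      _ < r / 2 + r / 2 := add_lt_add (lt_of_le_of_lt h1 (hN ω)) hdist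
      _ = r := by ring
  refine ⟨ω, ?_⟩
  intro y hy
  apply hU'
  exact mem_iInter₂.mp hy N hN1
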